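/- Left-endpoint dominance of the maximal prefix: let n ∈ ℕ, let c : Fin n → ℝ be nonnegative costs with c(T) := ∑_{j∈T} c_j, let ℓ : Fin n → ℝ be nondecreasing (ℓ_0 ≤ ℓ_1 ≤ ⋯ ≤ ℓ_{n−1}), and let d ≥ 0. Let T_d be the maximal prefix {0, 1, …, m−1} with c(T_d) ≤ d, and assume T_d ≠ Fin n. Then for every Q ⊆ Fin n with c(Q) ≤ d, the set Fin n ∖ Q is nonempty and min_{j ∉ Q} ℓ_j ≤ min_{j ∉ T_d} ℓ_j. -/

import Mathlib

open Finset

open Classical in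
/-- The maximal prefix (downward-closed subset of `Fin n`) with cost at most `bound`.
Since prefixes form a chain, their union (here: `sup`) is the largest one, i.e. the
set `{0, 1, …, m−1}` for the largest feasible `m`. -/
noncomputable def maxPrefix (n : ℕ) (c : Fin n → ℝ) (bound : ℝ) : Finset (Fin n) :=
  ((Finset.univ : Finset (Fin n)).powerset.filter fun S =>
    (∀ j ∈ S, ∀ i : Fin n, i ≤ j → i ∈ S) ∧ ∑ j ∈ S, c j ≤ bound).sup id

open Classical in
lemma maxPrefix_mem_family (n : ℕ) (c : Fin n → ℝ) (hc : ∀ j, 0 ≤ c j) (d : ℝ) (hd : 0 ≤ d) :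
    ((∀ j ∈ maxPrefix n c d, ∀ i : Fin n, i ≤ j → i ∈ maxPrefix n c d) ∧
      ∑ j ∈ maxPrefix n c d, c j ≤ d) ∧
    (∀ S : Finset (Fin n), (∀ j ∈ S, ∀ i : Fin n, i ≤ j → i ∈ S) → ∑ j ∈ S, c j ≤ d →
      S ⊆ maxPrefix n c d) := by
  set F := ((Finset.univ : Finset (Fin n)).powerset.filter fun S =>
    (∀ j ∈ S, ∀ i : Fin n, i ≤ j → i ∈ S) ∧ ∑ j ∈ S, c j ≤ d) with hF
  have hmemF : ∀ S : Finset (Fin n), S ∈ F ↔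
      ((∀ j ∈ S, ∀ i : Fin n, i ≤ j → i ∈ S) ∧ ∑ j ∈ S, c j ≤ d) := by
    intro S
    simp [hF, Finset.mem_filter, Finset.mem_powerset]
  have hsub : ∀ S ∈ F, S ⊆ maxPrefix n c d := by
    intro S hS
    exact Finset.le_sup (f := id) hS
  -- F is a chain: any two downward-closed sets are comparable
  have hchain : ∀ S ∈ F, ∀ T ∈ F, S ⊆ T ∨ T ⊆ S := by
    intro S hS T hT
    by_cases h : S ⊆ T
    · exact Or.inl h
    · right
      obtain ⟨j, hjS, hjT⟩ := Finset.not_subset.mp h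
      intro i hiT
      rcases le_total i j with hij | hji
      · exact ((hmemF S).mp hS).1 j hjS i hij
      · exact absurd (((hmemF T).mp hT).1 i hiT j hji) hjT
  have hne : F.Nonempty := ⟨∅, (hmemF ∅).mpr ⟨by simp, by simpa using hd⟩⟩
  -- maximal element of F
  obtain ⟨M, hMF, hMmax⟩ : ∃ M ∈ F, ∀ S ∈ F, ¬ M < S := by
    obtain ⟨M, hM⟩ := Finset.exists_maximal hne
    exact ⟨M, hM.1, fun S hS hlt => lt_irrefl _ (lt_of_lt_of_le hlt (hM.2 hS hlt.le))⟩
  have hallsub : ∀ S ∈ F, S ⊆ M := by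
    intro S hS
    rcases hchain S hS M hMF with h | h
    · exact h
    · by_contra hn
      exact hMmax S hS (Finset.ssubset_iff_subset_ne.mpr ⟨h, fun he => hn (he ▸ subset_rfl)⟩)
  have hTM : maxPrefix n c d = M := by
    apply subset_antisymm
    · exact Finset.sup_le fun S hS => hallsub S hS
    · exact hsub M hMF
  refine ⟨by rw [hTM]; exact (hmemF M).mp hMF, ?_⟩
  intro S h1 h2
  exact hsub S ((hmemF S).mpr ⟨h1, h2⟩)

/-- **Left-endpoint dominance of the maximal prefix.**
With nonnegative costs `c`, nondecreasing left endpoints `ℓ`, budget `d ≥ 0`, and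
`T_d` the maximal prefix of cost at most `d` with `T_d ≠ Fin n`: for every `Q` with
`c(Q) ≤ d`, the complement of `Q` is nonempty and
`min_{j ∉ Q} ℓ j ≤ min_{j ∉ T_d} ℓ j`. -/
theorem maxPrefix_left_endpoint_dominance (n : ℕ) (c : Fin n → ℝ) (hc : ∀ j, 0 ≤ c j)
    (ℓ : Fin n → ℝ) (hℓ : Monotone ℓ) (d : ℝ) (hd : 0 ≤ d)
    (hT : maxPrefix n c d ≠ Finset.univ)
    (Q : Finset (Fin n)) (hQ : ∑ j ∈ Q, c j ≤ d) :
    ∃ (hQc : Qᶜ.Nonempty) (hTc : (maxPrefix n c d)ᶜ.Nonempty),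
      Qᶜ.inf' hQc ℓ ≤ (maxPrefix n c d)ᶜ.inf' hTc ℓ := by
  obtain ⟨⟨hdown, hcost⟩, hmax⟩ := maxPrefix_mem_family n c hc d hd
  set T := maxPrefix n c d with hTdef
  have hTc : Tᶜ.Nonempty := by
    rw [Finset.nonempty_iff_ne_empty]
    intro h
    exact hT ((Finset.compl_eq_empty_iff _).mp h)
  have hQc : Qᶜ.Nonempty := by
    rw [Finset.nonempty_iff_ne_empty]
    intro h
    have hQu : Q = Finset.univ := (Finset.compl_eq_empty_iff _).mp h
    subst hQu
    exact hT (subset_antisymm (Finset.subset_univ _)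
      (hmax Finset.univ (fun _ _ i _ => Finset.mem_univ i) hQ))
  refine ⟨hQc, hTc, ?_⟩
  set t := Tᶜ.min' hTc with ht
  have htT : t ∈ Tᶜ := Finset.min'_mem _ _
  -- find j ∉ Q with j ≤ t
  have hj : ∃ j ∈ Qᶜ, j ≤ t := by
    by_contra h
    push_neg at h
    have hsub : Finset.Iic t ⊆ Q := by
      intro i hi
      by_contra hiQ
      exact absurd (Finset.mem_Iic.mp hi) (not_le.mpr (h i (Finset.mem_compl.mpr hiQ)))
    have hIiccost : ∑ j ∈ Finset.Iic t, c j ≤ d :=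
      le_trans (Finset.sum_le_sum_of_subset_of_nonneg hsub fun i _ _ => hc i) hQ
    have : Finset.Iic t ⊆ T :=
      hmax _ (fun j hj i hij => Finset.mem_Iic.mpr (le_trans hij (Finset.mem_Iic.mp hj)))
        hIiccost
    exact (Finset.mem_compl.mp htT) (this (Finset.mem_Iic.mpr le_rfl))
  obtain ⟨j, hjQ, hjt⟩ := hj
  apply Finset.le_inf'
  intro i hi
  exact le_trans (Finset.inf'_le ℓ hjQ) (hℓ (le_trans hjt (Finset.min'_le _ _ hi)))
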